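/- Let G be a non-simple loop-free multigraph, minimal in the sense that no finite sequence of admissible double edge swaps yields a smaller graph, with maximal non-simple edge {u1,u2}, u1 > u2. Then every vertex larger than u1 is adjacent to both u1 and u2, and moreover every such large vertex is adjacent to some ordinary vertex not adjacent to u1 and to some ordinary vertex not adjacent to u2. -/

import Mathlib

open Finset

/-- A loopy multigraph on vertex set `V`: each unordered pair (possibly a loop)
has a multiplicity. -/
abbrev Multigraph (V : Type*) := Sym2 V → ℕ

variable {V : Type*}

/-- The degree of a vertex: each incident edge counts with multiplicity,
and a loop counts twice. -/
def mdeg [Fintype V] (G : Multigraph V) (v : V) : ℕ :=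
  (∑ u : V, G s(v, u)) + G s(v, v)

/-- A multigraph is simple if it has no loops and every multiplicity is at most one. -/
def IsSimpleMG (G : Multigraph V) : Prop :=
  (∀ v : V, G s(v, v) = 0) ∧ ∀ e : Sym2 V, G e ≤ 1

/-- A multigraph is loop-free if it has no loops. -/
def LoopFree (G : Multigraph V) : Prop := ∀ v : V, G s(v, v) = 0

/-- A degree function is graphical if it is realized by some simple graph. -/
def GraphicalDeg [Fintype V] (d : V → ℕ) : Prop :=
  ∃ H : Multigraph V, IsSimpleMG H ∧ ∀ v : V, mdeg H v = d v

/-- The result of the double edge swap removing one copy each of `{v1,v2}` and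
`{v3,v4}` and adding one copy each of `{v2,v3}` and `{v4,v1}`. -/
def swapped [DecidableEq V] (G : Multigraph V) (v1 v2 v3 v4 : V) : Multigraph V :=
  fun e => G e - (if e = s(v1, v2) then 1 else 0) - (if e = s(v3, v4) then 1 else 0)
    + (if e = s(v2, v3) then 1 else 0) + (if e = s(v4, v1) then 1 else 0)

/-- The edges `{v1,v2}` and `{v3,v4}` share no vertex. -/
def NotIncident (v1 v2 v3 v4 : V) : Prop :=
  v1 ≠ v3 ∧ v1 ≠ v4 ∧ v2 ≠ v3 ∧ v2 ≠ v4

/-- One admissible double edge swap: the two removed edges exist, are not incident,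
and at least one of them is a loop or has multiplicity at least two. -/
def AdmissibleStep [DecidableEq V] (G G' : Multigraph V) : Prop :=
  ∃ v1 v2 v3 v4 : V, NotIncident v1 v2 v3 v4 ∧
    1 ≤ G s(v1, v2) ∧ 1 ≤ G s(v3, v4) ∧
    (v1 = v2 ∨ v3 = v4 ∨ 2 ≤ G s(v1, v2) ∨ 2 ≤ G s(v3, v4)) ∧
    G' = swapped G v1 v2 v3 v4

/-- The larger endpoint of an unordered pair. -/
def pmax [LinearOrder V] (p : Sym2 V) : V :=
  Sym2.lift ⟨fun a b => max a b, fun a b => max_comm a b⟩ p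

/-- The smaller endpoint of an unordered pair. -/
def pmin [LinearOrder V] (p : Sym2 V) : V :=
  Sym2.lift ⟨fun a b => min a b, fun a b => min_comm a b⟩ p

/-- Order on unordered pairs: compare larger endpoints, then smaller endpoints. -/
def PairLT [LinearOrder V] (p q : Sym2 V) : Prop :=
  pmax p < pmax q ∨ (pmax p = pmax q ∧ pmin p < pmin q)

def PairLE [LinearOrder V] (p q : Sym2 V) : Prop := p = q ∨ PairLT p q

/-- The pair `p` carries a non-simple edge of `G`: a multiple edge or a loop. -/
def NonSimpleAt (G : Multigraph V) (p : Sym2 V) : Prop :=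
  2 ≤ G p ∨ (p.IsDiag ∧ 1 ≤ G p)

/-- `p` is the maximal non-simple edge of `G`. -/
def MaxNonSimple [LinearOrder V] (G : Multigraph V) (p : Sym2 V) : Prop :=
  NonSimpleAt G p ∧ ∀ q : Sym2 V, NonSimpleAt G q → PairLE q p

/-- The strict partial order on multigraphs with fixed degrees: `G < H` iff `H` is
non-simple and its maximal non-simple edge is larger than all non-simple edges of `G`,
or the maximal non-simple edges agree but have strictly larger multiplicity in `H`. -/
def GraphLT [LinearOrder V] (G H : Multigraph V) : Prop :=
  ∃ p : Sym2 V, MaxNonSimple H p ∧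
    ((∀ q : Sym2 V, NonSimpleAt G q → PairLT q p) ∨ (MaxNonSimple G p ∧ G p < H p))

section AuxiliaryLemmas

variable {V : Type*}

lemma pmax_mk' [LinearOrder V] (a b : V) : pmax s(a,b) = max a b := rfl

lemma pmin_mk' [LinearOrder V] (a b : V) : pmin s(a,b) = min a b := rfl

lemma mg_comm (G : Multigraph V) (a b : V) : G s(a,b) = G s(b,a) := by
  rw [Sym2.eq_swap]

lemma pairLE_pmax [LinearOrder V] {q p : Sym2 V} (h : PairLE q p) :
    pmax q ≤ pmax p := by
  rcases h with rfl | (h | ⟨h, _⟩)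
  · exact le_rfl
  · exact h.le
  · exact h.le

open Finset in
lemma sum_split3 [Fintype V] [DecidableEq V] (h : V → ℕ) (u1 u2 w : V)
    (h12 : u2 ≠ u1) (hw1 : w ≠ u1) (hw2 : w ≠ u2) :
    ∑ z, h z = h u1 + h u2 + h w + ∑ z ∈ ((univ.erase u1).erase u2).erase w, h z := by
  rw [← Finset.add_sum_erase _ h (Finset.mem_univ u1),
      ← Finset.add_sum_erase _ h (show u2 ∈ univ.erase u1 by simp [h12]),
      ← Finset.add_sum_erase _ h (show w ∈ (univ.erase u1).erase u2 by simp [hw1, hw2])]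
  ring

open Finset in
lemma count_lt3 [Fintype V] [DecidableEq V] (f g : V → ℕ) (u1 u2 w : V)
    (h12 : u2 ≠ u1) (hw1 : w ≠ u1) (hw2 : w ≠ u2)
    (hterm : ∀ z, z ≠ u1 → z ≠ u2 → z ≠ w → g z ≤ f z)
    (hbound : g u1 + g u2 + g w + 1 ≤ f u1 + f u2 + f w) :
    ∑ z, g z < ∑ z, f z := by
  rw [sum_split3 f u1 u2 w h12 hw1 hw2, sum_split3 g u1 u2 w h12 hw1 hw2]
  have hs : ∑ z ∈ ((univ.erase u1).erase u2).erase w, g z ≤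
      ∑ z ∈ ((univ.erase u1).erase u2).erase w, f z := by
    refine Finset.sum_le_sum fun z hz => ?_
    simp only [Finset.mem_erase] at hz
    exact hterm z hz.2.2.1 hz.2.1 hz.1
  omega

end AuxiliaryLemmas

section SwapLemma

variable {V : Type*}

lemma swap_graphLT [LinearOrder V] (G : Multigraph V) (hlf : LoopFree G)
    (u1 u2 : V) (hu : u2 < u1) (hmax : MaxNonSimple G s(u1, u2))
    (a b z w : V) (hab : s(a, b) = s(u1, u2))
    (haz : a ≠ z) (haw : a ≠ w) (hbz : b ≠ z) (hbw : b ≠ w) (hzw : z ≠ w)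
    (hwa : G s(w, a) = 0)
    (hcond : 1 ≤ G s(b, z) → PairLT s(b, z) s(u1, u2)) :
    GraphLT (swapped G a b z w) G := by
  have hne12 : u1 ≠ u2 := hu.ne'
  have hne_ab : a ≠ b := by
    rcases Sym2.eq_iff.mp hab with ⟨h1, h2⟩ | ⟨h1, h2⟩
    · rw [h1, h2]; exact hne12
    · rw [h1, h2]; exact hne12.symm
  -- pair inequalities
  have h_ab_zw : s(a, b) ≠ s(z, w) := by rw [Ne, Sym2.eq_iff]; tauto
  have h_ab_bz : s(a, b) ≠ s(b, z) := by rw [Ne, Sym2.eq_iff]; tauto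
  have h_ab_wa : s(a, b) ≠ s(w, a) := by rw [Ne, Sym2.eq_iff]; tauto
  have h_zw_bz : s(z, w) ≠ s(b, z) := by rw [Ne, Sym2.eq_iff]; tauto
  have h_zw_wa : s(z, w) ≠ s(w, a) := by rw [Ne, Sym2.eq_iff]; tauto
  have h_bz_wa : s(b, z) ≠ s(w, a) := by rw [Ne, Sym2.eq_iff]; tauto
  -- values of the swapped graph
  have v_ab : swapped G a b z w s(a, b) = G s(a, b) - 1 := by
    simp [swapped, h_ab_zw, h_ab_bz, h_ab_wa]
  have v_bz : swapped G a b z w s(b, z) = G s(b, z) + 1 := by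
    simp [swapped, Ne.symm h_ab_bz, Ne.symm h_zw_bz, h_bz_wa]
  have v_wa : swapped G a b z w s(w, a) = 1 := by
    simp [swapped, Ne.symm h_ab_wa, Ne.symm h_zw_wa, Ne.symm h_bz_wa, hwa]
  have v_other : ∀ q : Sym2 V, q ≠ s(b, z) → q ≠ s(w, a) →
      swapped G a b z w q ≤ G q := by
    intro q h1 h2
    simp only [swapped, if_neg h1, if_neg h2, add_zero]
    exact (Nat.sub_le _ _).trans (Nat.sub_le _ _)
  have v_diag : LoopFree (swapped G a b z w) := by
    intro v
    have d1 : s(v, v) ≠ s(b, z) := by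
      rw [Ne, Sym2.eq_iff]
      rintro (⟨h1, h2⟩ | ⟨h1, h2⟩) <;> simp_all
    have d2 : s(v, v) ≠ s(w, a) := by
      rw [Ne, Sym2.eq_iff]
      rintro (⟨h1, h2⟩ | ⟨h1, h2⟩) <;> simp_all
    have := v_other s(v, v) d1 d2
    have h0 := hlf v
    omega
  have hGp2 : 2 ≤ G s(u1, u2) := by
    rcases hmax.1 with h | ⟨hd, _⟩
    · exact h
    · exact absurd (Sym2.mk_isDiag_iff.mp hd) hne12
  have vp : swapped G a b z w s(u1, u2) = G s(u1, u2) - 1 := by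
    rw [← hab]; exact v_ab
  -- classification of non-simple pairs of the swapped graph
  have key : ∀ q : Sym2 V, NonSimpleAt (swapped G a b z w) q →
      (q = s(u1, u2) ∧ 2 ≤ swapped G a b z w s(u1, u2)) ∨ PairLT q s(u1, u2) := by
    intro q hq
    have hq2 : 2 ≤ swapped G a b z w q := by
      rcases hq with h | ⟨hd, h1⟩
      · exact h
      · exfalso
        induction q using Sym2.ind with
        | _ x y =>
          have hxy : x = y := Sym2.mk_isDiag_iff.mp hd
          subst hxy
          rw [v_diag x] at h1
          omega
    by_cases hbzq : q = s(b, z)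
    · subst hbzq
      rw [v_bz] at hq2
      exact Or.inr (hcond (by omega))
    by_cases hwaq : q = s(w, a)
    · subst hwaq
      rw [v_wa] at hq2
      omega
    · have hle := v_other q hbzq hwaq
      have hns : NonSimpleAt G q := Or.inl (by omega)
      rcases hmax.2 q hns with rfl | hlt
      · exact Or.inl ⟨rfl, hq2⟩
      · exact Or.inr hlt
  refine ⟨s(u1, u2), hmax, ?_⟩
  by_cases h3 : 3 ≤ G s(u1, u2)
  · right
    refine ⟨⟨Or.inl (by omega), ?_⟩, by omega⟩
    intro q hq
    rcases key q hq with ⟨rfl, _⟩ | h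
    · exact Or.inl rfl
    · exact Or.inr h
  · left
    intro q hq
    rcases key q hq with ⟨rfl, h2⟩ | h
    · omega
    · exact h

lemma swap_absurd [Fintype V] [LinearOrder V] (G : Multigraph V) (hlf : LoopFree G)
    (hmin : ∀ G' : Multigraph V, Relation.ReflTransGen AdmissibleStep G G' → ¬ GraphLT G' G)
    (u1 u2 : V) (hu : u2 < u1) (hmax : MaxNonSimple G s(u1, u2))
    (a b z w : V) (hab : s(a, b) = s(u1, u2))
    (haz : a ≠ z) (haw : a ≠ w) (hbz : b ≠ z) (hbw : b ≠ w) (hzw : z ≠ w)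
    (hzw1 : 1 ≤ G s(z, w)) (hwa : G s(w, a) = 0)
    (hcond : 1 ≤ G s(b, z) → PairLT s(b, z) s(u1, u2)) : False := by
  have hne12 : u1 ≠ u2 := hu.ne'
  have hGp2 : 2 ≤ G s(u1, u2) := by
    rcases hmax.1 with h | ⟨hd, _⟩
    · exact h
    · exact absurd (Sym2.mk_isDiag_iff.mp hd) hne12
  have hab2 : 2 ≤ G s(a, b) := by rw [hab]; exact hGp2
  refine hmin (swapped G a b z w) (Relation.ReflTransGen.single ?_)
    (swap_graphLT G hlf u1 u2 hu hmax a b z w hab haz haw hbz hbw hzw hwa hcond)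
  exact ⟨a, b, z, w, ⟨haz, haw, hbz, hbw⟩, by omega, hzw1,
    Or.inr (Or.inr (Or.inl hab2)), rfl⟩

end SwapLemma

/-- Lemma 2: every large vertex is adjacent to both u1 and u2, and is
adjacent to some ordinary vertex not adjacent to u1 and to some ordinary vertex not
adjacent to u2. -/
theorem large_vertices_in_V1_cap_V2 [Fintype V] [LinearOrder V]
    (G : Multigraph V) (hlf : LoopFree G)
    (hord : ∀ u v : V, mdeg G u < mdeg G v → u < v)
    (hmin : ∀ G' : Multigraph V, Relation.ReflTransGen AdmissibleStep G G' → ¬ GraphLT G' G)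
    (u1 u2 : V) (hmax : MaxNonSimple G s(u1, u2)) (hu : u2 < u1)
    (w : V) (hw : u1 < w) :
    1 ≤ G s(w, u1) ∧ 1 ≤ G s(w, u2) ∧
    (∃ x : V, x ≠ u1 ∧ x ≠ u2 ∧ G s(x, u1) = 0 ∧ 1 ≤ G s(w, x)) ∧
    (∃ x : V, x ≠ u1 ∧ x ≠ u2 ∧ G s(x, u2) = 0 ∧ 1 ≤ G s(w, x)) := by
    classical
  have hne12 : u1 ≠ u2 := hu.ne'
  have hGp2 : 2 ≤ G s(u1, u2) := by
    rcases hmax.1 with h | ⟨hd, _⟩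
    · exact h
    · exact absurd (Sym2.mk_isDiag_iff.mp hd) hne12
  have hpmaxp : pmax s(u1, u2) = u1 := by
    rw [pmax_mk', max_eq_left hu.le]
  -- every pair containing a vertex larger than u1 is simple
  have hls : ∀ x y : V, u1 < x → G s(x, y) ≤ 1 := by
    intro x y hx
    by_contra h
    push_neg at h
    have hns : NonSimpleAt G s(x, y) := Or.inl h
    have hle := pairLE_pmax (hmax.2 _ hns)
    rw [hpmaxp, pmax_mk'] at hle
    exact absurd (lt_of_lt_of_le hx (le_max_left x y)) (not_lt.2 hle)
  have hdeg : ∀ v : V, mdeg G v = ∑ t : V, G s(v, t) := by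
    intro v; simp [mdeg, hlf v]
  have hww : w ≠ u1 := hw.ne'
  have hwu2 : w ≠ u2 := (hu.trans hw).ne'
  -- Part A : w is adjacent to u1
  have hA : 1 ≤ G s(w, u1) := by
    by_contra hA0
    push_neg at hA0
    have hwa : G s(w, u1) = 0 := by omega
    by_cases hex : ∃ x, x ≠ u1 ∧ x ≠ u2 ∧ 1 ≤ G s(w, x) ∧ (x < u1 ∨ G s(u2, x) = 0)
    · obtain ⟨x, hx1, hx2, hx3, hx4⟩ := hex
      have hxw : x ≠ w := by
        intro h
        rw [h, hlf w] at hx3; omega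
      refine swap_absurd G hlf hmin u1 u2 hu hmax u1 u2 x w rfl hx1.symm hww.symm
        hx2.symm hwu2.symm hxw (by rw [mg_comm G x w]; exact hx3) hwa ?_
      intro h1
      rcases hx4 with hlt | h0
      · left
        rw [pmax_mk', hpmaxp]
        exact max_lt hu hlt
      · rw [h0] at h1; omega
    · push_neg at hex
      have hcnt : mdeg G w < mdeg G u2 := by
        rw [hdeg w, hdeg u2]
        refine count_lt3 (fun t => G s(u2, t)) (fun t => G s(w, t)) u1 u2 w hu.ne hww hwu2 ?_ ?_
        · intro t h1 h2 _
          by_cases ht : 1 ≤ G s(w, t)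
          · have h5 := (hex t h1 h2 ht).2
            have h6 := hls w t hw
            omega
          · omega
        · have e1 : G s(u2, u1) = G s(u1, u2) := mg_comm G u2 u1
          have e2 := hls w u2 hw
          have e3 := hlf w
          have e4 := hlf u2
          omega
      exact absurd (hord _ _ hcnt) (not_lt.2 (hu.trans hw).le)
  -- Part A' : w is adjacent to u2
  have hB : 1 ≤ G s(w, u2) := by
    by_contra hB0
    push_neg at hB0
    have hwa : G s(w, u2) = 0 := by omega
    by_cases hex : ∃ x, x ≠ u1 ∧ x ≠ u2 ∧ 1 ≤ G s(w, x) ∧ (x < u2 ∨ G s(u1, x) = 0)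
    · obtain ⟨x, hx1, hx2, hx3, hx4⟩ := hex
      have hxw : x ≠ w := by
        intro h
        rw [h, hlf w] at hx3; omega
      refine swap_absurd G hlf hmin u1 u2 hu hmax u2 u1 x w Sym2.eq_swap hx2.symm
        hwu2.symm hx1.symm hww.symm hxw (by rw [mg_comm G x w]; exact hx3) hwa ?_
      intro h1
      rcases hx4 with hlt | h0
      · right
        constructor
        · rw [pmax_mk', hpmaxp, max_eq_left (hlt.trans hu).le]
        · rw [pmin_mk', pmin_mk', min_eq_right (hlt.trans hu).le, min_eq_right hu.le]
          exact hlt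
      · rw [h0] at h1; omega
    · push_neg at hex
      have hcnt : mdeg G w < mdeg G u1 := by
        rw [hdeg w, hdeg u1]
        refine count_lt3 (fun t => G s(u1, t)) (fun t => G s(w, t)) u1 u2 w hu.ne hww hwu2 ?_ ?_
        · intro t h1 h2 _
          by_cases ht : 1 ≤ G s(w, t)
          · have h5 := (hex t h1 h2 ht).2
            have h6 := hls w t hw
            omega
          · omega
        · have e1 := hls w u1 hw
          have e3 := hlf w
          have e4 := hlf u1
          omega
      exact absurd (hord _ _ hcnt) (not_lt.2 hw.le)
  refine ⟨hA, hB, ?_, ?_⟩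
  -- Part B : an ordinary neighbour of w not adjacent to u1
  · by_contra hex
    push_neg at hex
    have hcnt : mdeg G w < mdeg G u1 := by
      rw [hdeg w, hdeg u1]
      refine count_lt3 (fun t => G s(u1, t)) (fun t => G s(w, t)) u1 u2 w hu.ne hww hwu2 ?_ ?_
      · intro t h1 h2 _
        by_cases ht : 1 ≤ G s(w, t)
        · have h5 : G s(t, u1) ≠ 0 := by
            intro h0
            have := hex t h1 h2 h0
            omega
          have h6 : G s(u1, t) = G s(t, u1) := mg_comm G u1 t
          have h7 := hls w t hw
          omega
        · omega
      · have e1 := hls w u1 hw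
        have e2 := hls w u2 hw
        have e3 := hlf w
        have e4 := hlf u1
        have e5 : G s(u1, w) = G s(w, u1) := mg_comm G u1 w
        omega
    exact absurd (hord _ _ hcnt) (not_lt.2 hw.le)
  -- Part B' : an ordinary neighbour of w not adjacent to u2
  · by_contra hex
    push_neg at hex
    have hcnt : mdeg G w < mdeg G u2 := by
      rw [hdeg w, hdeg u2]
      refine count_lt3 (fun t => G s(u2, t)) (fun t => G s(w, t)) u1 u2 w hu.ne hww hwu2 ?_ ?_
      · intro t h1 h2 _
        by_cases ht : 1 ≤ G s(w, t)
        · have h5 : G s(t, u2) ≠ 0 := by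
            intro h0
            have := hex t h1 h2 h0
            omega
          have h6 : G s(u2, t) = G s(t, u2) := mg_comm G u2 t
          have h7 := hls w t hw
          omega
        · omega
      · have e1 := hls w u1 hw
        have e2 := hls w u2 hw
        have e3 := hlf w
        have e4 := hlf u2
        have e5 : G s(u2, w) = G s(w, u2) := mg_comm G u2 w
        have e6 : G s(u2, u1) = G s(u1, u2) := mg_comm G u2 u1
        omega
    exact absurd (hord _ _ hcnt) (not_lt.2 (hu.trans hw).le)
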